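/- Let V be a finite-dimensional real inner product space and let C ⊆ V be a closed convex cone that is proper (C ∩ (−C) = {0}) and generating (C − C = V). Let A : V → V be a linear map. Then exp(tA) maps C into itself for every t ≥ 0 if and only if ⟨A u, v⟩ ≥ 0 for all u ∈ C and all v in the dual cone C* = {v ∈ V : ⟨w, v⟩ ≥ 0 for all w ∈ C} satisfying ⟨u, v⟩ = 0. -/

import Mathlib

open scoped RealInnerProductSpace
open NormedSpace Metric Set Filter Topology

/-- **Schneider–Vidyasagar characterization of cross-positive maps.**
Let `V` be a finite-dimensional real inner product space and `C ⊆ V` a closed convex cone that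
is proper (`C ∩ (-C) = {0}`) and generating (`C - C = V`), and let `A : V → V` be linear.  Then
the operator exponential `exp(tA)` maps `C` into itself for every `t ≥ 0` if and only if
`⟨A u, v⟩ ≥ 0` for all `u ∈ C` and all `v` in the dual cone of `C` satisfying `⟨u, v⟩ = 0`. -/
theorem schneider_vidyasagar (V : Type*) [NormedAddCommGroup V] [InnerProductSpace ℝ V]
    [FiniteDimensional ℝ V] (C : Set V)
    (hclosed : IsClosed C) (hconvex : Convex ℝ C)
    (hcone : ∀ a : ℝ, 0 < a → ∀ x ∈ C, a • x ∈ C)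
    (hproper : C ∩ (-C) = {0})
    (hgenerating : ∀ x : V, ∃ y ∈ C, ∃ z ∈ C, x = y - z)
    (A : V →ₗ[ℝ] V) :
    (∀ t : ℝ, 0 ≤ t → ∀ x ∈ C, NormedSpace.exp (t • A.toContinuousLinearMap) x ∈ C) ↔
      (∀ u ∈ C, ∀ v : V, (∀ w ∈ C, 0 ≤ ⟪w, v⟫) → ⟪u, v⟫ = 0 → 0 ≤ ⟪A u, v⟫) := by
  set A' := A.toContinuousLinearMap with hA'
  have hAA' : ∀ y : V, A' y = A y := fun y => rfl
  have h0C : (0 : V) ∈ C := by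
    have : (0 : V) ∈ C ∩ (-C) := by rw [hproper]; exact rfl
    exact this.1
  -- derivative of the trajectory
  have hxderiv : ∀ (u : V) (s : ℝ),
      HasDerivAt (fun z : ℝ => exp (z • A') u) (A' (exp (s • A') u)) s := by
    intro u s
    have h1 := hasDerivAt_exp_smul_const' (𝕂 := ℝ) A' s
    have h2 := h1.clm_apply (hasDerivAt_const s u)
    have h3 : (A' * exp (s • A')) u = A' (exp (s • A') u) := rfl
    simpa [h3] using h2
  constructor
  · -- easy direction
    intro H u hu v hv huv
    set φ : ℝ → ℝ := fun z => ⟪exp (z • A') u, v⟫ with hφdef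
    have hd : HasDerivAt φ ⟪A' u, v⟫ 0 := by
      have := HasDerivAt.inner ℝ (hxderiv u 0) (hasDerivAt_const (0 : ℝ) v)
      simpa [φ] using this
    have hslope : Tendsto (slope φ 0) (𝓝[>] 0) (𝓝 ⟪A' u, v⟫) :=
      (hasDerivAt_iff_tendsto_slope.mp hd).mono_left
        (nhdsWithin_mono 0 fun z hz => ne_of_gt hz)
    have hφ0 : φ 0 = 0 := by simpa [φ] using huv
    have hge : ∀ᶠ z in 𝓝[>] (0 : ℝ), 0 ≤ slope φ 0 z := by
      filter_upwards [self_mem_nhdsWithin] with z hz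
      have hz' : (0 : ℝ) < z := hz
      have hφz : 0 ≤ φ z := hv _ (H z hz'.le u hu)
      rw [slope_def_field, hφ0, sub_zero, sub_zero]
      positivity
    have : 0 ≤ ⟪A' u, v⟫ := ge_of_tendsto hslope hge
    simpa [hAA'] using this
  · -- hard direction
    intro H t ht u hu
    -- projection onto the cone, with Moreau-type properties
    have proj : ∀ p : V, ∃ c ∈ C, infDist p C = ‖p - c‖ ∧
        (∀ w ∈ C, ⟪p - c, w⟫ ≤ 0) ∧ ⟪p - c, c⟫ = 0 := by
      intro p
      obtain ⟨c, hc, hmin⟩ :=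
        exists_norm_eq_iInf_of_complete_convex ⟨0, h0C⟩ hclosed.isComplete hconvex p
      have hvar := (norm_eq_iInf_iff_real_inner_le_zero hconvex hc).1 hmin
      have h2 : ⟪p - c, c⟫ ≤ 0 := by
        have h2c : (2 : ℝ) • c ∈ C := hcone 2 two_pos c hc
        have := hvar _ h2c
        have he : (2 : ℝ) • c - c = c := by
          rw [two_smul]; abel
        rwa [he] at this
      have h3 : 0 ≤ ⟪p - c, c⟫ := by
        have hhc : (1 / 2 : ℝ) • c ∈ C := hcone _ (by norm_num) c hc
        have := hvar _ hhc
        have he : (1 / 2 : ℝ) • c - c = -((1 / 2 : ℝ) • c) := by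
          rw [← neg_smul]
          rw [show (-(1/2) : ℝ) = 1/2 - 1 by norm_num, sub_smul, one_smul]
        rw [he, inner_neg_right, real_inner_smul_right] at this
        linarith
      have hcc : ⟪p - c, c⟫ = 0 := le_antisymm h2 h3
      refine ⟨c, hc, ?_, ?_, hcc⟩
      · rw [infDist_eq_iInf]
        simp_rw [dist_eq_norm]
        exact hmin.symm
      · intro w hw
        have h4 := hvar w hw
        rw [inner_sub_right, hcc, sub_zero] at h4
        exact h4
    set x : ℝ → V := fun s => exp (s • A') u with hxdef
    have hxd : ∀ s, HasDerivAt x (A' (x s)) s := fun s => hxderiv u s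
    have hxcont : Continuous x := by
      rw [continuous_iff_continuousAt]
      exact fun s => (hxd s).continuousAt
    set K : ℝ := ‖A'‖ with hKdef
    set f : ℝ → ℝ := fun s => (infDist (x s) C) ^ 2 with hfdef
    have hfnonneg : ∀ s, 0 ≤ f s := fun s => sq_nonneg _
    have hfc : Continuous f := ((continuous_infDist_pt C).comp hxcont).pow 2
    have hf0 : f 0 = 0 := by
      have hx0 : x 0 = u := by simp [x]
      simp [f, hx0, infDist_zero_of_mem hu]
    have key : ∀ s ∈ Ico (0 : ℝ) t, ∀ r, 2 * K * f s < r →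
        ∃ᶠ z in 𝓝[>] s, (z - s)⁻¹ * (f z - f s) < r := by
      intro s _ r hr
      obtain ⟨c, hcC, hdist, hneg, hcc⟩ := proj (x s)
      set g : ℝ → ℝ := fun z => ⟪x z - c, x z - c⟫ with hgdef
      have hgz : ∀ z, f z ≤ g z := by
        intro z
        have h1 : infDist (x z) C ≤ ‖x z - c‖ := by
          rw [← dist_eq_norm]; exact infDist_le_dist_of_mem hcC
        have := pow_le_pow_left₀ infDist_nonneg h1 2
        simpa [g, real_inner_self_eq_norm_sq] using this
      have hgs : g s = f s := by
        simp only [g, f, real_inner_self_eq_norm_sq, hdist]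
      have hg' : HasDerivAt g (⟪x s - c, A' (x s)⟫ + ⟪A' (x s), x s - c⟫) s := by
        have hd : HasDerivAt (fun z => x z - c) (A' (x s)) s := (hxd s).sub_const c
        exact HasDerivAt.inner ℝ hd hd
      have hgval : ⟪x s - c, A' (x s)⟫ + ⟪A' (x s), x s - c⟫ = 2 * ⟪A' (x s), x s - c⟫ := by
        rw [real_inner_comm (x s - c)]; ring
      have hbound : ⟪A' (x s), x s - c⟫ ≤ K * f s := by
        have hsplit : ⟪A' (x s), x s - c⟫ = ⟪A' c, x s - c⟫ + ⟪A' (x s - c), x s - c⟫ := by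
          rw [← inner_add_left, ← map_add]
          congr 2
          abel
        have hterm1 : ⟪A' c, x s - c⟫ ≤ 0 := by
          have hdual : ∀ w ∈ C, 0 ≤ ⟪w, -(x s - c)⟫ := by
            intro w hw
            rw [inner_neg_right, real_inner_comm]
            linarith [hneg w hw]
          have horth : ⟪c, -(x s - c)⟫ = 0 := by
            rw [inner_neg_right, real_inner_comm]
            simp [hcc]
          have := H c hcC _ hdual horth
          rw [inner_neg_right, ← hAA'] at this
          linarith
        have hterm2 : ⟪A' (x s - c), x s - c⟫ ≤ K * f s := by
          have h1 : ⟪A' (x s - c), x s - c⟫ ≤ ‖A' (x s - c)‖ * ‖x s - c‖ :=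
            real_inner_le_norm _ _
          have h2 : ‖A' (x s - c)‖ ≤ K * ‖x s - c‖ := A'.le_opNorm _
          have h3 : f s = ‖x s - c‖ ^ 2 := by
            show (infDist (x s) C) ^ 2 = _
            rw [hdist]
          have h4 := mul_le_mul_of_nonneg_right h2 (norm_nonneg (x s - c))
          rw [h3]
          nlinarith [norm_nonneg (x s - c)]
        linarith
      have hlt : ⟪x s - c, A' (x s)⟫ + ⟪A' (x s), x s - c⟫ < r := by
        rw [hgval]; linarith
      have hev : ∀ᶠ z in 𝓝[>] s, slope g s z < r := by
        have htend : Tendsto (slope g s) (𝓝[>] s) (𝓝 (⟪x s - c, A' (x s)⟫ + ⟪A' (x s), x s - c⟫)) :=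
          (hasDerivAt_iff_tendsto_slope.mp hg').mono_left
            (nhdsWithin_mono s fun z hz => ne_of_gt hz)
        exact htend.eventually (Filter.Tendsto.eventually_lt_const hlt tendsto_id)
      refine ((hev.and self_mem_nhdsWithin).mono ?_).frequently
      rintro z ⟨hzr, hz⟩
      have hzs : s < z := hz
      have hle : (z - s)⁻¹ * (f z - f s) ≤ (z - s)⁻¹ * (g z - g s) := by
        apply mul_le_mul_of_nonneg_left _ (inv_nonneg.mpr (by linarith))
        have := hgz z
        rw [hgs]
        linarith
      have heq : slope g s z = (z - s)⁻¹ * (g z - g s) := by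
        rw [slope_def_field]; field_simp
      rw [heq] at hzr
      linarith
    have hg := le_gronwallBound_of_liminf_deriv_right_le (f := f)
      (f' := fun s => 2 * K * f s) (δ := 0) (K := 2 * K) (ε := 0) (a := 0) (b := t)
      hfc.continuousOn key (le_of_eq hf0)
      (fun s _ => by rw [add_zero])
    have hft := hg t (right_mem_Icc.mpr ht)
    rw [sub_zero, gronwallBound_ε0_δ0] at hft
    have hfeq : f t = 0 := le_antisymm hft (hfnonneg t)
    have hid : infDist (x t) C = 0 := by
      have := pow_eq_zero_iff (n := 2) (by norm_num) |>.mp hfeq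
      exact this
    exact (hclosed.mem_iff_infDist_zero ⟨0, h0C⟩).mpr hid
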